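/- arXiv:1909.06261 — 3 statements merged into one kernel-verified Lean document; each statement's English description precedes it below -/
import Mathlib

section
/- The symmetric tensor corresponding to the cubic form f = x_0^3 + ... + x_n^3 has exactly 2^{n+1} - 1 eigenpoints in P^n(C), namely the points whose coordinates are each 0 or 1 (not all zero), and they are all reduced (the defining quadrics meet transversally at each). -/
open MvPolynomial

lemma eval_pderiv_cubic (n : ℕ) (p : Fin (n+1) → ℂ) (j : Fin (n+1)) :
    eval p (pderiv j (∑ i, X i ^ 3 : MvPolynomial (Fin (n+1)) ℂ)) = 3 * p j ^ 2 := by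
  rw [map_sum, map_sum]
  have key : ∀ x : Fin (n+1),
      eval p (pderiv j ((X x : MvPolynomial (Fin (n+1)) ℂ) ^ 3))
        = if x = j then 3 * p j ^ 2 else 0 := by
    intro x
    rcases eq_or_ne x j with rfl | h
    · simp [pow_succ, pderiv_mul, pderiv_X_self]; ring
    · simp [pow_succ, pderiv_mul, pderiv_X_of_ne h, h]
  rw [Finset.sum_congr rfl fun x _ => key x, Finset.sum_ite_eq' Finset.univ j]
  simp

lemma jac_entry (n : ℕ) (s : Fin (n+1) → ℂ) (i : Fin (n+1)) (j : Fin (n+2)) :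
    eval (Fin.snoc s (3 : ℂ))
      (pderiv j ((3 : MvPolynomial (Fin (n + 2)) ℂ) * X (Fin.castSucc i) ^ 2
        - X (Fin.last (n + 1)) * X (Fin.castSucc i)))
    = (if j = Fin.castSucc i then 6 * s i - 3 else 0)
      + (if j = Fin.last (n+1) then -(s i) else 0) := by
  have h3 : pderiv j (3 : MvPolynomial (Fin (n+2)) ℂ) = 0 := by
    rw [show (3 : MvPolynomial (Fin (n+2)) ℂ) = C 3 from
      (map_ofNat (C : ℂ →+* MvPolynomial (Fin (n+2)) ℂ) 3).symm, pderiv_C]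
  rcases eq_or_ne j (Fin.castSucc i) with rfl | h
  · simp [pow_succ, pderiv_mul, pderiv_X_self, h3,
      pderiv_X_of_ne ((Fin.castSucc_lt_last i).ne' : Fin.last (n+1) ≠ Fin.castSucc i),
      (Fin.castSucc_lt_last i).ne, Fin.snoc_castSucc, Fin.snoc_last]
    ring
  · rcases eq_or_ne j (Fin.last (n+1)) with rfl | h2
    · simp [pow_succ, pderiv_mul, pderiv_X_self, h3, pderiv_X_of_ne (Ne.symm h),
        h, Fin.snoc_castSucc, Fin.snoc_last]
    · simp [pow_succ, pderiv_mul, h3, pderiv_X_of_ne (Ne.symm h), pderiv_X_of_ne (Ne.symm h2),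
        h, h2]

/-- The symmetric tensor corresponding to `f = x_0^3 + ... + x_n^3` has exactly
`2^(n+1) - 1` eigenpoints in `ℙⁿ(ℂ)`, namely the points whose coordinates are each
`0` or `1` (not all zero), and they are all reduced: the defining quadrics
`3 x_i^2 - λ x_i` meet transversally (full-rank Jacobian) at each eigenpair. -/
theorem stmt_0 (n : ℕ)
    (f : MvPolynomial (Fin (n + 1)) ℂ) (hf : f = ∑ i, X i ^ 3) :
    (∀ p : Fin (n + 1) → ℂ, p ≠ 0 →
      ((∀ i j, p i * eval p (pderiv j f) - p j * eval p (pderiv i f) = 0) ↔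
        ∃ (c : ℂ) (s : Fin (n + 1) → ℂ), c ≠ 0 ∧ (∀ i, s i = 0 ∨ s i = 1) ∧ s ≠ 0 ∧
          p = c • s)) ∧
    {s : Fin (n + 1) → ℂ | (∀ i, s i = 0 ∨ s i = 1) ∧ s ≠ 0}.ncard = 2 ^ (n + 1) - 1 ∧
    (∀ s : Fin (n + 1) → ℂ, (∀ i, s i = 0 ∨ s i = 1) → s ≠ 0 →
      (Matrix.of (fun (i : Fin (n + 1)) (j : Fin (n + 2)) =>
        eval (Fin.snoc s (3 : ℂ))
          (pderiv j ((3 : MvPolynomial (Fin (n + 2)) ℂ) * X (Fin.castSucc i) ^ 2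
            - X (Fin.last (n + 1)) * X (Fin.castSucc i))))).rank = n + 1) := by
  classical
  subst hf
  refine ⟨?_, ?_, ?_⟩
  · -- characterization of eigenpoints
    intro p hp
    constructor
    · intro h
      have h' : ∀ i j : Fin (n+1), p i * (3 * p j ^ 2) - p j * (3 * p i ^ 2) = 0 := by
        intro i j
        have := h i j
        rwa [eval_pderiv_cubic, eval_pderiv_cubic] at this
      obtain ⟨i0, hi0⟩ := Function.ne_iff.mp hp
      simp only [Pi.zero_apply] at hi0
      refine ⟨p i0, fun i => p i / p i0, hi0, ?_, ?_, ?_⟩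
      · intro i
        have key : p i = 0 ∨ p i = p i0 := by
          have hfac : 3 * p i0 * p i * (p i0 - p i) = 0 := by linear_combination h' i i0
          rcases mul_eq_zero.mp hfac with h1 | h1
          · rcases mul_eq_zero.mp h1 with h2 | h2
            · exact absurd (by rcases mul_eq_zero.mp h2 with h3 | h3 <;> simp_all) hi0
            · exact Or.inl h2
          · exact Or.inr (sub_eq_zero.mp h1).symm
        rcases key with h1 | h1 <;> simp [h1, div_self hi0]
      · intro h0
        have := congrFun h0 i0
        simp [div_self hi0] at this
      · funext i
        simp only [Pi.smul_apply, smul_eq_mul]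
        field_simp
    · rintro ⟨c, s, hc, hs01, -, rfl⟩
      intro i j
      rw [eval_pderiv_cubic, eval_pderiv_cubic]
      simp only [Pi.smul_apply, smul_eq_mul]
      rcases hs01 i with h1 | h1 <;> rcases hs01 j with h2 | h2 <;> simp [h1, h2]
  · -- counting
    set e : (Fin (n+1) → Bool) → (Fin (n+1) → ℂ) := fun b i => if b i then 1 else 0 with he
    have hinj : Function.Injective e := by
      intro a b hab
      funext i
      have h := congrFun hab i
      simp only [he] at h
      revert h
      cases a i <;> cases b i <;> simp
    have hset : {s : Fin (n + 1) → ℂ | (∀ i, s i = 0 ∨ s i = 1) ∧ s ≠ 0}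
        = e '' ({fun _ => false} : Set (Fin (n+1) → Bool))ᶜ := by
      ext s
      simp only [Set.mem_setOf_eq, Set.mem_image, Set.mem_compl_iff, Set.mem_singleton_iff]
      constructor
      · rintro ⟨h01, hne⟩
        refine ⟨fun i => if s i = 0 then false else true, ?_, ?_⟩
        · intro h0
          apply hne
          funext i
          have := congrFun h0 i
          by_cases h : s i = 0
          · simpa using h
          · simp [h] at this
        · funext i
          rcases h01 i with h | h <;> simp [he, h]
      · rintro ⟨b, hb, rfl⟩
        constructor
        · intro i
          simp only [he]
          cases b i <;> simp
        · intro h0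
          apply hb
          funext i
          have := congrFun h0 i
          simp only [he, Pi.zero_apply] at this
          cases hbi : b i
          · rfl
          · simp [hbi] at this
    rw [hset, Set.ncard_image_of_injective _ hinj]
    have hcompl := Set.ncard_add_ncard_compl ({fun _ => false} : Set (Fin (n+1) → Bool))
    have hsing : ({fun _ => false} : Set (Fin (n+1) → Bool)).ncard = 1 := Set.ncard_singleton _
    have hcard : Nat.card (Fin (n+1) → Bool) = 2 ^ (n+1) := by
      simp [Nat.card_eq_fintype_card]
    omega
  · -- Jacobian rank
    intro s hs01 hs0
    set M : Matrix (Fin (n+1)) (Fin (n+2)) ℂ :=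
      Matrix.of (fun (i : Fin (n + 1)) (j : Fin (n + 2)) =>
        eval (Fin.snoc s (3 : ℂ))
          (pderiv j ((3 : MvPolynomial (Fin (n + 2)) ℂ) * X (Fin.castSucc i) ^ 2
            - X (Fin.last (n + 1)) * X (Fin.castSucc i)))) with hM
    have hentry : ∀ i j, M i j = (if j = Fin.castSucc i then 6 * s i - 3 else 0)
        + (if j = Fin.last (n+1) then -(s i) else 0) := fun i j => jac_entry n s i j
    have hd : ∀ i, (6 * s i - 3 : ℂ) ≠ 0 := by
      intro i
      rcases hs01 i with h | h <;> rw [h] <;> norm_num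
    have hsurj : Function.Surjective M.mulVecLin := by
      intro y
      refine ⟨Fin.snoc (fun i => y i / (6 * s i - 3)) 0, ?_⟩
      funext i
      simp only [Matrix.mulVecLin_apply, Matrix.mulVec, dotProduct]
      rw [Fin.sum_univ_castSucc]
      simp only [Fin.snoc_castSucc, Fin.snoc_last, hentry, mul_zero, add_zero]
      rw [Finset.sum_eq_single i]
      · rw [if_pos rfl, if_neg (Fin.castSucc_lt_last i).ne, add_zero,
          mul_div_cancel₀ _ (hd i)]
      · intro k _ hk
        have : ¬ (Fin.castSucc k = Fin.castSucc i) := fun hkk => hk (Fin.castSucc_injective _ hkk)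
        rw [if_neg this, if_neg (Fin.castSucc_lt_last k).ne, add_zero, zero_mul]
      · intro h
        exact absurd (Finset.mem_univ i) h
    rw [Matrix.rank, LinearMap.range_eq_top.mpr hsurj]
    simp
end

section
/- The cubic f = x_0^3 + x_1^3 + x_2^3 + x_3^3 has exactly 15 eigenpoints in P^3(C), namely the points whose coordinates are each 0 or 1 and not all zero, all of which are regular. -/
open MvPolynomial

/-- The cubic `f = x_0^3 + x_1^3 + x_2^3 + x_3^3` has exactly 15 eigenpoints in
`ℙ³(ℂ)`, namely the points whose coordinates are each `0` or `1` and not all zero,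
all of which are regular. -/
theorem stmt_10 (f : MvPolynomial (Fin 4) ℂ)
    (hf : f = X 0 ^ 3 + X 1 ^ 3 + X 2 ^ 3 + X 3 ^ 3) :
    (∀ p : Fin 4 → ℂ, p ≠ 0 →
      (((∃ lam : ℂ, ∀ i, eval p (pderiv i f) = lam * p i) ↔
        ∃ (c : ℂ) (s : Fin 4 → ℂ), c ≠ 0 ∧ (∀ i, s i = 0 ∨ s i = 1) ∧ s ≠ 0 ∧
          p = c • s) ∧
       ((∃ lam : ℂ, ∀ i, eval p (pderiv i f) = lam * p i) →
        (fun i => eval p (pderiv i f)) ≠ 0))) ∧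
    {s : Fin 4 → ℂ | (∀ i, s i = 0 ∨ s i = 1) ∧ s ≠ 0}.ncard = 15 := by
  subst hf
  have key : ∀ (p : Fin 4 → ℂ) (i : Fin 4),
      eval p (pderiv i ((X 0 : MvPolynomial (Fin 4) ℂ) ^ 3 + X 1 ^ 3 + X 2 ^ 3 + X 3 ^ 3))
        = 3 * p i ^ 2 := by
    intro p i
    fin_cases i <;> simp [pderiv_pow, pderiv_X_self, pderiv_X_of_ne] <;> ring
  constructor
  · intro p hp
    obtain ⟨i0, hi0⟩ : ∃ i, p i ≠ 0 := Function.ne_iff.mp hp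
    constructor
    · constructor
      · rintro ⟨lam, hlam⟩
        simp only [key] at hlam
        have hl : lam = 3 * p i0 :=
          (mul_right_cancel₀ hi0 (by linear_combination hlam i0)).symm
        have hlne : lam ≠ 0 := by
          rw [hl]; exact mul_ne_zero (by norm_num) hi0
        refine ⟨lam / 3, fun i => if p i = 0 then 0 else 1, ?_, ?_, ?_, ?_⟩
        · exact div_ne_zero hlne (by norm_num)
        · intro i; by_cases h : p i = 0 <;> simp [h]
        · intro h
          have := congrFun h i0
          simp [hi0] at this
        · funext i
          by_cases h : p i = 0
          · simp [h]
          · have h3 : 3 * p i = lam := mul_right_cancel₀ h (by linear_combination hlam i)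
            have hpi : p i = lam / 3 := by
              rw [eq_div_iff (by norm_num : (3:ℂ) ≠ 0)]
              linear_combination h3
            simp only [Pi.smul_apply, smul_eq_mul, if_neg h, mul_one]
            exact hpi
      · rintro ⟨c, s, hc, hs01, hsne, rfl⟩
        refine ⟨3 * c, fun i => ?_⟩
        rw [key]
        rcases hs01 i with h | h <;> simp [h] <;> ring
    · rintro - h
      have := congrFun h i0
      simp only [key] at this
      exact hi0 (by simpa [pow_eq_zero_iff] using this)
  · have : {s : Fin 4 → ℂ | (∀ i, s i = 0 ∨ s i = 1) ∧ s ≠ 0}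
        = ↑((Fintype.piFinset fun _ : Fin 4 => ({0, 1} : Finset ℂ)).erase 0) := by
      ext s
      simp [_root_.funext_iff, Set.mem_setOf_eq, and_comm]
    rw [this, Set.ncard_coe_finset, Finset.card_erase_of_mem]
    · simp [Fintype.card_piFinset]
    · simp
end

section
/- For the cubic f = x_0^2 (x_1 + i x_2) in C[x_0, x_1, x_2] (where i^2 = -1), every eigenpoint is irregular; i.e., any p ∈ P^2 such that ∇f(p) is proportional to p satisfies ∇f(p) = 0. In particular f has no regular eigenpoints. -/
open MvPolynomial

/-- For the cubic `f = x_0^2 (x_1 + i x_2)`, every eigenpoint is irregular: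
any `p ∈ ℙ²` with `∇f(p)` proportional to `p` satisfies `∇f(p) = 0`.
In particular `f` has no regular eigenpoints. -/
theorem stmt_11 (f : MvPolynomial (Fin 3) ℂ)
    (hf : f = X 0 ^ 2 * (X 1 + C Complex.I * X 2)) :
    ∀ p : Fin 3 → ℂ, p ≠ 0 →
      (∃ lam : ℂ, ∀ k, eval p (pderiv k f) = lam * p k) →
      ∀ k, eval p (pderiv k f) = 0 := by
  rintro p hp ⟨lam, hlam⟩ k
  subst hf
  have e0 := hlam 0
  have e1 := hlam 1
  have e2 := hlam 2
  simp [pderiv_mul, pderiv_pow, pderiv_X, Pi.single_apply] at e0 e1 e2 ⊢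
  rcases eq_or_ne lam 0 with h0 | h0
  · subst h0
    simp at e0 e1 e2
    fin_cases k <;> simp [e0, e1, e2]
  · exfalso
    have hg : p 1 + Complex.I * p 2 = 0 := by
      have h : lam * (p 1 + Complex.I * p 2) = lam * 0 := by
        rw [mul_zero]
        linear_combination e1.symm + Complex.I * e2.symm + p 0 ^ 2 * Complex.I_sq
      exact mul_left_cancel₀ h0 h
    have hx0 : p 0 = 0 := by
      have h : lam * p 0 = 0 := by rw [← e0, hg, zero_mul]
      exact (mul_eq_zero.mp h).resolve_left h0
    have hx1 : p 1 = 0 := by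
      have := e1; rw [hx0] at this
      simpa [h0] using this.symm
    have hx2 : p 2 = 0 := by
      have := e2; rw [hx0] at this
      simpa [h0] using this.symm
    apply hp
    funext i; fin_cases i <;> assumption
end
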